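/- The map sending a model ideal 𝔞 to the fractional O_K-ideal 𝔞O_K it generates induces a well-defined surjective homomorphism of monoids Φ : Cl^mod(A_σ) → Cl(K), where Cl(K) is the ideal class group of K (in particular, for model ideals 𝔞, 𝔟 the ideal (𝔞 * 𝔟)O_K equals the product ideal (𝔞O_K)(𝔟O_K) up to a principal factor), and the kernel of Φ, i.e. the preimage of the trivial ideal class, is exactly the submonoid Z of classes of the model ideals 𝔞^⋆_{O_K,x}. -/

import Mathlib

open NumberField Pointwise
open scoped nonZeroDivisors

variable (K : Type*) [Field K] [NumberField K] (σ : InfinitePlace K)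

/-- A Pisot–Vijayaraghavan unit: a unit of infinite order whose absolute values at all the
places other than `σ` are `< 1`. -/
def IsPVUnit (u : (𝓞 K)ˣ) : Prop :=
  (¬ IsOfFinOrder u) ∧ ∀ w : InfinitePlace K, w ≠ σ → w ((u : 𝓞 K) : K) < 1

/-- The data of a model ideal: an (invertible) fractional ideal `𝔄`, an exponent vector `x`,
and strictness data `b` for the smallest window (`b w = true` means `≤`, `false` means `<`). -/
structure MIData (K : Type*) [Field K] [NumberField K] (σ : InfinitePlace K) where
  I : (FractionalIdeal (𝓞 K)⁰ K)ˣ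
  x : {w : InfinitePlace K // w ≠ σ} → ℝ
  b : {w : InfinitePlace K // w ≠ σ} → Bool

/-- The model ideal `𝔞^⋆_{𝔄,x}` as a subset of `K`. -/
def MIData.set (u : (𝓞 K)ˣ) (d : MIData K σ) : Set K :=
  {α : K | α ∈ (d.I : FractionalIdeal (𝓞 K)⁰ K) ∧ ∀ w : {w : InfinitePlace K // w ≠ σ},
      if d.b w then (w : InfinitePlace K) α ≤ ((w : InfinitePlace K) ((u : 𝓞 K) : K)) ^ (d.x w)
      else (w : InfinitePlace K) α < ((w : InfinitePlace K) ((u : 𝓞 K) : K)) ^ (d.x w)}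

/-- The star product of model ideals: the product of the fractional ideals together with the
product of the windows (a product of intervals is closed exactly when both factors are). -/
noncomputable def MIData.star (d e : MIData K σ) : MIData K σ :=
  ⟨d.I * e.I, d.x + e.x, fun w => d.b w && e.b w⟩

/-- Two model ideals are equivalent when they differ by scaling by an element of `K^×`. -/
def MIEquiv (u : (𝓞 K)ˣ) (d e : MIData K σ) : Prop :=
  ∃ γ : Kˣ, γ • d.set K σ u = e.set K σ u

section Aux

variable {K σ}

/-- The principal fractional ideal generated by a unit of `K`, as a unit. -/
noncomputable def ssU (γ : Kˣ) : (FractionalIdeal (𝓞 K)⁰ K)ˣ :=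
  ⟨FractionalIdeal.spanSingleton _ (γ : K), FractionalIdeal.spanSingleton _ ((γ⁻¹ : Kˣ) : K),
    by rw [FractionalIdeal.spanSingleton_mul_spanSingleton, Units.mul_inv,
      FractionalIdeal.spanSingleton_one],
    by rw [FractionalIdeal.spanSingleton_mul_spanSingleton, Units.inv_mul,
      FractionalIdeal.spanSingleton_one]⟩

theorem mk_ssU (γ : Kˣ) : ClassGroup.mk K (ssU (K := K) γ) = 1 :=
  ClassGroup.mk_eq_one_iff.mpr ⟨⟨(γ : K), by
    show ((FractionalIdeal.spanSingleton _ (γ : K) : FractionalIdeal (𝓞 K)⁰ K) :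
      Submodule (𝓞 K) K) = _
    rw [FractionalIdeal.coe_spanSingleton]⟩⟩

/-- The `𝓞 K`-span of a model set is the underlying fractional ideal. -/
theorem MIData.span_set (u : (𝓞 K)ˣ) (hu : IsPVUnit K σ u) (d : MIData K σ) :
    Submodule.span (𝓞 K) (d.set K σ u)
      = ((d.I : FractionalIdeal (𝓞 K)⁰ K) : Submodule (𝓞 K) K) := by
  have hu0 : ((u : 𝓞 K) : K) ≠ 0 := by exact_mod_cast u.ne_zero
  refine le_antisymm (Submodule.span_le.mpr fun α hα => ?_) fun α hα => ?_
  · exact FractionalIdeal.mem_coe.mpr hα.1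
  · have hev : ∀ᶠ n : ℕ in Filter.atTop, ∀ w : {w : InfinitePlace K // w ≠ σ},
        ((w : InfinitePlace K) ((u : 𝓞 K) : K)) ^ n * (w : InfinitePlace K) α
          < ((w : InfinitePlace K) ((u : 𝓞 K) : K)) ^ (d.x w) := by
      rw [Filter.eventually_all]
      intro w
      have hpos : (0:ℝ) < ((w : InfinitePlace K) ((u : 𝓞 K) : K)) ^ (d.x w) :=
        Real.rpow_pos_of_pos (InfinitePlace.pos_iff.mpr hu0) _
      have ht : Filter.Tendsto
          (fun n : ℕ => ((w : InfinitePlace K) ((u : 𝓞 K) : K)) ^ n * (w : InfinitePlace K) α)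
          Filter.atTop (nhds 0) := by
        simpa using (tendsto_pow_atTop_nhds_zero_of_lt_one
          (apply_nonneg _ _) (hu.2 w w.2)).mul_const ((w : InfinitePlace K) α)
      exact ht.eventually_lt_const hpos
    obtain ⟨n, hn⟩ := hev.exists
    set β : K := (((u : 𝓞 K) : K)) ^ n * α with hβdef
    have hβ : β ∈ d.set K σ u := by
      constructor
      · have : ((u : 𝓞 K) ^ n) • α ∈ ((d.I : FractionalIdeal (𝓞 K)⁰ K) : Submodule (𝓞 K) K) :=
          Submodule.smul_mem _ _ hα
        rw [Algebra.smul_def, map_pow] at this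
        exact FractionalIdeal.mem_coe.mp this
      · intro w
        have hlt : (w : InfinitePlace K) β
            < ((w : InfinitePlace K) ((u : 𝓞 K) : K)) ^ (d.x w) := by
          rw [hβdef, map_mul, map_pow]
          exact hn w
        split <;> [exact le_of_lt hlt; exact hlt]
    have hmem : ((u⁻¹ : (𝓞 K)ˣ) : 𝓞 K) ^ n • β ∈ Submodule.span (𝓞 K) (d.set K σ u) :=
      Submodule.smul_mem _ _ (Submodule.subset_span hβ)
    have heq : ((u⁻¹ : (𝓞 K)ˣ) : 𝓞 K) ^ n • β = α := by
      rw [Algebra.smul_def, hβdef, map_pow, ← RingOfIntegers.coe_eq_algebraMap, ← mul_assoc,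
        ← mul_pow]
      have : (((u⁻¹ : (𝓞 K)ˣ) : 𝓞 K) : K) * (((u : 𝓞 K) : K)) = 1 := by
        rw [RingOfIntegers.coe_eq_algebraMap, RingOfIntegers.coe_eq_algebraMap, ← map_mul,
          u.inv_mul, map_one]
      rw [this, one_pow, one_mul]
    rwa [heq] at hmem

/-- Scaling a model set by `γ` multiplies the associated fractional ideal by `(γ)`. -/
theorem mulKey (u : (𝓞 K)ˣ) (hu : IsPVUnit K σ u) {d e : MIData K σ} (γ : Kˣ)
    (h : γ • d.set K σ u = e.set K σ u) : ssU γ * d.I = e.I := by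
  apply Units.ext
  apply FractionalIdeal.coeToSubmodule_injective
  show (((ssU γ : FractionalIdeal (𝓞 K)⁰ K) * (d.I : FractionalIdeal (𝓞 K)⁰ K) :
      FractionalIdeal (𝓞 K)⁰ K) : Submodule (𝓞 K) K)
    = ((e.I : FractionalIdeal (𝓞 K)⁰ K) : Submodule (𝓞 K) K)
  rw [FractionalIdeal.coe_mul]
  show ((FractionalIdeal.spanSingleton _ (γ : K) : FractionalIdeal (𝓞 K)⁰ K) :
      Submodule (𝓞 K) K) * _ = _
  rw [FractionalIdeal.coe_spanSingleton, ← MIData.span_set u hu d, ← MIData.span_set u hu e,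
    Submodule.span_mul_span, ← h]
  congr 1
  ext x
  simp only [Set.singleton_mul, Set.mem_image, Set.mem_smul_set, Units.smul_def, smul_eq_mul]

end Aux

/-- The map `𝔞 ↦ 𝔞O_K` induces a well-defined surjective epimorphism of monoids
`Φ : Cl^mod(A_σ) → Cl(K)` whose kernel is exactly the submonoid `Z` of classes of the model
ideals `𝔞^⋆_{O_K,x}`. -/
theorem stmt3 (u : (𝓞 K)ˣ) (hu : IsPVUnit K σ u) :
    -- Φ is computed by the ideal generated by the model set: `𝔞O_K` represents `ClassGroup.mk K 𝔄`
    (∀ d : MIData K σ, ∃ J : (FractionalIdeal (𝓞 K)⁰ K)ˣ,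
        ((J : FractionalIdeal (𝓞 K)⁰ K) : Submodule (𝓞 K) K)
            = Submodule.span (𝓞 K) (d.set K σ u) ∧
        ClassGroup.mk K J = ClassGroup.mk K d.I) ∧
    -- Φ is well defined on classes of model ideals
    (∀ d e : MIData K σ, MIEquiv K σ u d e → ClassGroup.mk K d.I = ClassGroup.mk K e.I) ∧
    -- Φ is a homomorphism: `(𝔞 * 𝔟)O_K = (𝔞O_K)(𝔟O_K)` up to a principal factor
    (∀ d e : MIData K σ,
        ClassGroup.mk K ((d.star K σ e).I) = ClassGroup.mk K d.I * ClassGroup.mk K e.I ∧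
        ∃ γ : Kˣ,
          ((Submodule.span (𝓞 K) ((d.star K σ e).set K σ u) : Submodule (𝓞 K) K) : Set K)
            = (γ : K) • ((Submodule.span (𝓞 K) (d.set K σ u)
                * Submodule.span (𝓞 K) (e.set K σ u) : Submodule (𝓞 K) K) : Set K)) ∧
    -- Φ is surjective
    (∀ c : ClassGroup (𝓞 K), ∃ d : MIData K σ, ClassGroup.mk K d.I = c) ∧
    -- the kernel of Φ is exactly `Z`
    (∀ d : MIData K σ,
        ClassGroup.mk K d.I = 1 ↔ ∃ e : MIData K σ, e.I = 1 ∧ MIEquiv K σ u d e) := by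
  have hu0 : ((u : 𝓞 K) : K) ≠ 0 := by exact_mod_cast u.ne_zero
  refine ⟨?_, ?_, ?_, ?_, ?_⟩
  · -- Part 1
    intro d
    exact ⟨d.I, (MIData.span_set u hu d).symm, rfl⟩
  · -- Part 2
    rintro d e ⟨γ, hγ⟩
    rw [← mulKey u hu γ hγ, map_mul, mk_ssU, one_mul]
  · -- Part 3
    intro d e
    constructor
    · show ClassGroup.mk K (d.I * e.I) = _
      rw [map_mul]
    · refine ⟨1, ?_⟩
      have hsub : Submodule.span (𝓞 K) ((d.star K σ e).set K σ u)
          = Submodule.span (𝓞 K) (d.set K σ u) * Submodule.span (𝓞 K) (e.set K σ u) := by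
        rw [MIData.span_set u hu, MIData.span_set u hu, MIData.span_set u hu]
        show (((d.I * e.I : (FractionalIdeal (𝓞 K)⁰ K)ˣ) : FractionalIdeal (𝓞 K)⁰ K) :
          Submodule (𝓞 K) K) = _
        rw [Units.val_mul, FractionalIdeal.coe_mul]
      rw [Units.val_one, one_smul, hsub]
  · -- Part 4: surjectivity
    intro c
    obtain ⟨I, rfl⟩ := ClassGroup.mk0_surjective (R := 𝓞 K) c
    exact ⟨⟨FractionalIdeal.mk0 K I, 0, fun _ => true⟩, ClassGroup.mk_mk0 K I⟩
  · -- Part 5: kernel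
    intro d
    constructor
    · intro h1
      obtain ⟨g, hg⟩ := (ClassGroup.mk_eq_one_iff.mp h1).principal
      have hg0 : g ≠ 0 := by
        rintro rfl
        apply Units.ne_zero d.I
        rw [← FractionalIdeal.coeToSubmodule_eq_bot, hg]
        simp
      set γ : Kˣ := Units.mk0 g hg0 with hγdef
      refine ⟨⟨1, fun w => d.x w
          + Real.logb ((w : InfinitePlace K) ((u : 𝓞 K) : K)) (((w : InfinitePlace K) g)⁻¹),
          d.b⟩, rfl, γ⁻¹, ?_⟩
      ext β
      rw [Set.mem_smul_set_iff_inv_smul_mem, inv_inv]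
      have hsm : γ • β = g * β := rfl
      simp only [MIData.set, Set.mem_setOf_eq]
      constructor
      · rintro ⟨hmem, hbd⟩
        rw [hsm] at hmem hbd
        constructor
        · show β ∈ ((1 : (FractionalIdeal (𝓞 K)⁰ K)ˣ) : FractionalIdeal (𝓞 K)⁰ K)
          rw [Units.val_one]
          have : g * β ∈ Submodule.span (𝓞 K) {g} := by
            rw [← hg]; exact FractionalIdeal.mem_coe.mpr hmem
          obtain ⟨c, hc⟩ := Submodule.mem_span_singleton.mp this
          refine (FractionalIdeal.mem_one_iff _).mpr ⟨c, ?_⟩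
          rw [Algebra.smul_def] at hc
          have h' : g * algebraMap (𝓞 K) K c = g * β := by rw [← hc]; ring
          exact mul_left_cancel₀ hg0 h'
        · intro w
          have hupos : 0 < (w : InfinitePlace K) ((u : 𝓞 K) : K) :=
            InfinitePlace.pos_iff.mpr hu0
          have hune1 : (w : InfinitePlace K) ((u : 𝓞 K) : K) ≠ 1 := ne_of_lt (hu.2 w w.2)
          have hwg : 0 < (w : InfinitePlace K) g := InfinitePlace.pos_iff.mpr hg0
          have hrw : ((w : InfinitePlace K) ((u : 𝓞 K) : K)) ^ (d.x w
              + Real.logb ((w : InfinitePlace K) ((u : 𝓞 K) : K)) (((w : InfinitePlace K) g)⁻¹))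
              = ((w : InfinitePlace K) ((u : 𝓞 K) : K)) ^ (d.x w) / (w : InfinitePlace K) g := by
            rw [Real.rpow_add hupos, Real.rpow_logb hupos hune1 (by positivity),
              div_eq_mul_inv]
          have hbw := hbd w
          rw [map_mul] at hbw
          rw [hrw]
          cases hB : d.b w
          · rw [if_neg (by simp [hB])] at hbw
            rw [if_neg (by simp)]
            rw [lt_div_iff₀ hwg, mul_comm]
            exact hbw
          · rw [if_pos hB] at hbw
            rw [if_pos rfl]
            rw [le_div_iff₀ hwg, mul_comm]
            exact hbw
      · rintro ⟨hmem, hbd⟩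
        rw [hsm]
        constructor
        · rw [show ((1 : (FractionalIdeal (𝓞 K)⁰ K)ˣ) : FractionalIdeal (𝓞 K)⁰ K) = 1 from
            Units.val_one] at hmem
          obtain ⟨c, hc⟩ := (FractionalIdeal.mem_one_iff _).mp hmem
          have : g * β ∈ Submodule.span (𝓞 K) {g} :=
            Submodule.mem_span_singleton.mpr ⟨c, by rw [Algebra.smul_def, hc, mul_comm]⟩
          rw [← hg] at this
          exact FractionalIdeal.mem_coe.mp this
        · intro w
          have hupos : 0 < (w : InfinitePlace K) ((u : 𝓞 K) : K) :=
            InfinitePlace.pos_iff.mpr hu0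
          have hune1 : (w : InfinitePlace K) ((u : 𝓞 K) : K) ≠ 1 := ne_of_lt (hu.2 w w.2)
          have hwg : 0 < (w : InfinitePlace K) g := InfinitePlace.pos_iff.mpr hg0
          have hrw : ((w : InfinitePlace K) ((u : 𝓞 K) : K)) ^ (d.x w
              + Real.logb ((w : InfinitePlace K) ((u : 𝓞 K) : K)) (((w : InfinitePlace K) g)⁻¹))
              = ((w : InfinitePlace K) ((u : 𝓞 K) : K)) ^ (d.x w) / (w : InfinitePlace K) g := by
            rw [Real.rpow_add hupos, Real.rpow_logb hupos hune1 (by positivity),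
              div_eq_mul_inv]
          have hbw := hbd w
          rw [hrw] at hbw
          rw [map_mul]
          cases hB : d.b w
          · rw [if_neg (by simp [hB])] at hbw
            rw [if_neg (by simp)]
            rw [mul_comm, ← lt_div_iff₀ hwg]
            exact hbw
          · rw [if_pos hB] at hbw
            rw [if_pos rfl]
            rw [mul_comm, ← le_div_iff₀ hwg]
            exact hbw
    · rintro ⟨e, he1, γ, hγ⟩
      have hkey := mulKey u hu γ hγ
      rw [he1] at hkey
      rw [← inv_eq_of_mul_eq_one_right hkey, map_inv, mk_ssU, inv_one]
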